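/- Let S : [0,1] → ℝ be continuous with S(v) > 0 for all v, and let g : [0,1] → ℝ be continuous with ∫₀¹ g(y) dy = 0. Define u(x) = ∫₀¹ ( ∫_y¹ S(v)^{-1}·( v − 𝟙_{[x,1]}(v) ) dv ) · g(y) dy for x ∈ [0,1], where 𝟙_{[x,1]}(v) = 1 if v ≥ x and 0 otherwise. Then u is differentiable on [0,1] with S(x)·u'(x) = ∫₀ˣ g(y) dy for all x ∈ [0,1]; in particular u'(0) = 0 and u'(1) = 0. -/

import Mathlib

open Set
open MeasureTheory

set_option maxHeartbeats 1000000

/-- Explicit inverse of the Neumann divergence-form generator: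
for continuous `S > 0` and continuous mean-zero `g`, the function
`u(x) = ∫₀¹ (∫_y¹ S(v)⁻¹(v − 𝟙_{[x,1]}(v)) dv) g(y) dy` is differentiable with
`S(x) u'(x) = ∫₀ˣ g`, and in particular `u'(0) = u'(1) = 0`. -/
theorem stmt_15 (S g : ℝ → ℝ) (hSc : ContinuousOn S (Icc (0 : ℝ) 1))
    (hSpos : ∀ v ∈ Icc (0 : ℝ) 1, 0 < S v) (hgc : ContinuousOn g (Icc (0 : ℝ) 1))
    (hgmean : ∫ y in (0 : ℝ)..1, g y = 0) (u : ℝ → ℝ)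
    (hu : ∀ x, u x = ∫ y in (0 : ℝ)..1,
      (∫ v in y..(1 : ℝ), (S v)⁻¹ * (v - if x ≤ v then (1 : ℝ) else 0)) * g y) :
    ∃ u' : ℝ → ℝ,
      (∀ x ∈ Icc (0 : ℝ) 1, HasDerivWithinAt u (u' x) (Icc (0 : ℝ) 1) x) ∧
      (∀ x ∈ Icc (0 : ℝ) 1, S x * u' x = ∫ y in (0 : ℝ)..x, g y) ∧
      u' 0 = 0 ∧ u' 1 = 0 := by
  have h01 : (0 : ℝ) ≤ 1 := zero_le_one
  have huIcc : uIcc (0 : ℝ) 1 = Icc 0 1 := uIcc_of_le h01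
  set h : ℝ → ℝ := fun v => (S v)⁻¹ with hhdef
  have hhc : ContinuousOn h (Icc 0 1) := hSc.inv₀ fun v hv => (hSpos v hv).ne'
  have hhvc : ContinuousOn (fun v => h v * v) (Icc 0 1) := hhc.mul continuousOn_id
  -- interval integrability of h and h·v on subintervals of [0,1]
  have hhint : ∀ a ∈ Icc (0 : ℝ) 1, ∀ b ∈ Icc (0 : ℝ) 1,
      IntervalIntegrable h volume a b := fun a ha b hb =>
    (hhc.mono (uIcc_subset_Icc ha hb)).intervalIntegrable
  have hhvint : ∀ a ∈ Icc (0 : ℝ) 1, ∀ b ∈ Icc (0 : ℝ) 1,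
      IntervalIntegrable (fun v => h v * v) volume a b := fun a ha b hb =>
    (hhvc.mono (uIcc_subset_Icc ha hb)).intervalIntegrable
  have hgint : ∀ a ∈ Icc (0 : ℝ) 1, ∀ b ∈ Icc (0 : ℝ) 1,
      IntervalIntegrable g volume a b := fun a ha b hb =>
    (hgc.mono (uIcc_subset_Icc ha hb)).intervalIntegrable
  -- integrability of indicators
  have hindint : ∀ x : ℝ, ∀ a ∈ Icc (0 : ℝ) 1, ∀ b ∈ Icc (0 : ℝ) 1,
      IntervalIntegrable ((Ici x).indicator h) volume a b := by
    intro x a ha b hb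
    have := hhint a ha b hb
    rw [intervalIntegrable_iff] at this ⊢
    exact this.indicator measurableSet_Ici
  set G : ℝ → ℝ := fun t => ∫ y in (0 : ℝ)..t, g y with hGdef
  set F : ℝ → ℝ := fun t => ∫ v in t..(1 : ℝ), h v with hFdef
  set A : ℝ → ℝ := fun t => ∫ v in t..(1 : ℝ), h v * v with hAdef
  have hmem0 : (0 : ℝ) ∈ Icc (0 : ℝ) 1 := left_mem_Icc.2 h01
  have hmem1 : (1 : ℝ) ∈ Icc (0 : ℝ) 1 := right_mem_Icc.2 h01
  -- derivative of F within Icc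
  have hFd : ∀ x ∈ Icc (0 : ℝ) 1, HasDerivWithinAt F (-(h x)) (Icc 0 1) x := by
    intro x hx
    haveI : Fact (x ∈ Icc (0 : ℝ) 1) := ⟨hx⟩
    exact intervalIntegral.integral_hasDerivWithinAt_left (hhint x hx 1 hmem1)
      (hhc.stronglyMeasurableAtFilter_nhdsWithin measurableSet_Icc x) (hhc x hx)
  have hAd : ∀ x ∈ Icc (0 : ℝ) 1,
      HasDerivWithinAt A (-(h x * x)) (Icc 0 1) x := by
    intro x hx
    haveI : Fact (x ∈ Icc (0 : ℝ) 1) := ⟨hx⟩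
    exact intervalIntegral.integral_hasDerivWithinAt_left (hhvint x hx 1 hmem1)
      (hhvc.stronglyMeasurableAtFilter_nhdsWithin measurableSet_Icc x) (hhvc x hx)
  have hFc : ContinuousOn F (Icc 0 1) := fun t ht => (hFd t ht).continuousWithinAt
  have hAc : ContinuousOn A (Icc 0 1) := fun t ht => (hAd t ht).continuousWithinAt
  -- kernel computation
  have hker : ∀ x ∈ Icc (0 : ℝ) 1, ∀ y ∈ Icc (0 : ℝ) 1,
      (∫ v in y..(1 : ℝ), h v * (v - if x ≤ v then (1 : ℝ) else 0))
        = A y - F (max x y) := by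
    intro x hx y hy
    have hi1 : IntervalIntegrable (fun v => h v * v) volume y 1 := hhvint y hy 1 hmem1
    have hi2 : IntervalIntegrable ((Ici x).indicator h) volume y 1 := hindint x y hy 1 hmem1
    have hsplit : (∫ v in y..(1 : ℝ), h v * (v - if x ≤ v then (1 : ℝ) else 0))
        = (∫ v in y..(1 : ℝ), h v * v) - ∫ v in y..(1 : ℝ), (Ici x).indicator h v := by
      rw [← intervalIntegral.integral_sub hi1 hi2]
      apply intervalIntegral.integral_congr
      intro v _
      by_cases hxv : x ≤ v <;> simp [Set.indicator_apply, mem_Ici, hxv] <;> ring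
    rw [hsplit]
    have hind : (∫ v in y..(1 : ℝ), (Ici x).indicator h v) = F (max x y) := by
      rcases le_or_gt x y with hxy | hxy
      · rw [max_eq_right hxy]
        apply intervalIntegral.integral_congr
        intro v hv
        rw [uIcc_of_le hy.2] at hv
        simp [Set.indicator_apply, mem_Ici, le_trans hxy hv.1]
      · rw [max_eq_left hxy.le]
        have h1 : IntervalIntegrable ((Ici x).indicator h) volume y x := hindint x y hy x hx
        have h2 : IntervalIntegrable ((Ici x).indicator h) volume x 1 := hindint x x hx 1 hmem1
        rw [← intervalIntegral.integral_add_adjacent_intervals h1 h2]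
        have hz : (∫ v in y..x, (Ici x).indicator h v) = 0 := by
          have hne : ∀ᵐ v : ℝ, v ≠ x := by
            rw [ae_iff]
            convert Real.volume_singleton (a := x) using 2
            ext v; simp
          rw [show (0 : ℝ) = ∫ _ in y..x, (0 : ℝ) by simp]
          apply intervalIntegral.integral_congr_ae
          filter_upwards [hne] with v hvne hv
          rw [uIoc_of_le hxy.le] at hv
          have : ¬ x ≤ v := fun hc => hvne (le_antisymm hv.2 hc)
          simp [Set.indicator_apply, mem_Ici, this]
        rw [hz, zero_add]
        apply intervalIntegral.integral_congr
        intro v hv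
        rw [uIcc_of_le hx.2] at hv
        simp [Set.indicator_apply, mem_Ici, hv.1]
    rw [hind]
  set C : ℝ := ∫ y in (0 : ℝ)..1, A y * g y with hCdef
  -- representation of u on [0,1]
  have hrep : ∀ x ∈ Icc (0 : ℝ) 1,
      u x = C - (F x * G x + ∫ y in x..(1 : ℝ), F y * g y) := by
    intro x hx
    have hu' : u x = ∫ y in (0 : ℝ)..1,
        (∫ v in y..(1 : ℝ), h v * (v - if x ≤ v then (1 : ℝ) else 0)) * g y := hu x
    rw [hu']
    have hFmc : ContinuousOn (fun y => F (max x y)) (Icc 0 1) :=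
      hFc.comp ((continuous_const.max continuous_id).continuousOn)
        (fun y hy => ⟨le_max_of_le_right hy.1, max_le hx.2 hy.2⟩)
    have hi3 : IntervalIntegrable (fun y => A y * g y) volume 0 1 :=
      ((hAc.mul hgc).mono huIcc.subset).intervalIntegrable
    have hi4 : IntervalIntegrable (fun y => F (max x y) * g y) volume 0 1 :=
      ((hFmc.mul hgc).mono huIcc.subset).intervalIntegrable
    have e1 : (∫ y in (0 : ℝ)..1,
        (∫ v in y..(1 : ℝ), h v * (v - if x ≤ v then (1 : ℝ) else 0)) * g y)
        = ∫ y in (0 : ℝ)..1, (A y - F (max x y)) * g y := by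
      apply intervalIntegral.integral_congr
      intro y hy
      rw [huIcc] at hy
      beta_reduce
      rw [hker x hx y hy]
    have e2 : (∫ y in (0 : ℝ)..1, (A y - F (max x y)) * g y)
        = (∫ y in (0 : ℝ)..1, A y * g y) - ∫ y in (0 : ℝ)..1, F (max x y) * g y := by
      rw [← intervalIntegral.integral_sub hi3 hi4]
      apply intervalIntegral.integral_congr
      intro y _
      beta_reduce
      ring
    have sub1 : uIcc (0 : ℝ) x ⊆ uIcc (0 : ℝ) 1 := by
      rw [huIcc]; exact uIcc_subset_Icc hmem0 hx
    have sub2 : uIcc x (1 : ℝ) ⊆ uIcc (0 : ℝ) 1 := by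
      rw [huIcc]; exact uIcc_subset_Icc hx hmem1
    have e3 : (∫ y in (0 : ℝ)..1, F (max x y) * g y)
        = (∫ y in (0 : ℝ)..x, F (max x y) * g y) + ∫ y in x..(1 : ℝ), F (max x y) * g y :=
      (intervalIntegral.integral_add_adjacent_intervals (hi4.mono_set sub1)
        (hi4.mono_set sub2)).symm
    have e4 : (∫ y in (0 : ℝ)..x, F (max x y) * g y) = F x * G x := by
      calc (∫ y in (0 : ℝ)..x, F (max x y) * g y)
          = ∫ y in (0 : ℝ)..x, F x * g y := by
            apply intervalIntegral.integral_congr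
            intro y hy
            rw [uIcc_of_le hx.1] at hy
            beta_reduce
            rw [max_eq_left hy.2]
        _ = F x * ∫ y in (0 : ℝ)..x, g y := intervalIntegral.integral_const_mul _ _
        _ = F x * G x := rfl
    have e5 : (∫ y in x..(1 : ℝ), F (max x y) * g y) = ∫ y in x..(1 : ℝ), F y * g y := by
      apply intervalIntegral.integral_congr
      intro y hy
      rw [uIcc_of_le hx.2] at hy
      beta_reduce
      rw [max_eq_right hy.1]
    rw [e1, e2, e3, e4, e5]
  refine ⟨fun x => h x * G x, ?_, ?_, ?_, ?_⟩
  · intro x hx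
    haveI : Fact (x ∈ Icc (0 : ℝ) 1) := ⟨hx⟩
    have hFd' : HasDerivWithinAt F (-(h x)) (Icc 0 1) x := hFd x hx
    have hGd : HasDerivWithinAt G (g x) (Icc 0 1) x :=
      intervalIntegral.integral_hasDerivWithinAt_right (hgint 0 hmem0 x hx)
        (hgc.stronglyMeasurableAtFilter_nhdsWithin measurableSet_Icc x) (hgc x hx)
    have hFgc : ContinuousOn (fun y => F y * g y) (Icc 0 1) := hFc.mul hgc
    have hWd : HasDerivWithinAt (fun t => ∫ y in t..(1 : ℝ), F y * g y)
        (-(F x * g x)) (Icc 0 1) x :=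
      intervalIntegral.integral_hasDerivWithinAt_left
        ((hFgc.mono (uIcc_subset_Icc hx hmem1)).intervalIntegrable)
        (hFgc.stronglyMeasurableAtFilter_nhdsWithin measurableSet_Icc x) (hFgc x hx)
    have hw : HasDerivWithinAt (fun t => C - (F t * G t + ∫ y in t..(1 : ℝ), F y * g y))
        (h x * G x) (Icc 0 1) x := by
      have := ((hFd'.mul hGd).add hWd).const_sub C
      exact this.congr_deriv (by ring)
    exact hw.congr (fun t ht => hrep t ht) (hrep x hx)
  · intro x hx
    have hx0 : S x ≠ 0 := (hSpos x hx).ne'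
    show S x * ((S x)⁻¹ * G x) = _
    rw [← mul_assoc, mul_inv_cancel₀ hx0, one_mul]
  · show h 0 * (∫ y in (0 : ℝ)..(0 : ℝ), g y) = 0
    simp
  · show h 1 * (∫ y in (0 : ℝ)..(1 : ℝ), g y) = 0
    rw [hgmean, mul_zero]
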